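/- arXiv:1706.03034 — 2 statements merged into one kernel-verified Lean document; each statement's English description precedes it below -/
import Mathlib

section
/- Let Ω ⊂ ℝ (N = 1) be a bounded open interval, 1 < q < p, and let φ, ψ be nontrivial Dirichlet eigenfunctions of the one-dimensional p-Laplacian (−(|u′|^{p−2}u′)′ = λ|u|^{p−2}u) and q-Laplacian respectively on Ω. Then φ and ψ are linearly independent, i.e., φ ∉ ℝψ. -/
open Set Filter

/-- Absolute value of the signed power `|t|^e * t`. -/
lemma stmt13_abs_sp {e : ℝ} (he : 0 < e + 1) (t : ℝ) : |(|t| ^ e * t)| = |t| ^ (e + 1) := by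
  rcases eq_or_ne t 0 with rfl | ht
  · simp [Real.zero_rpow he.ne']
  · rw [abs_mul, abs_of_nonneg (Real.rpow_nonneg (abs_nonneg t) e),
      Real.rpow_add_one (abs_ne_zero.2 ht)]

lemma stmt13_sp_nonneg_eq {e : ℝ} (he : 0 < e + 1) {t : ℝ} (ht : 0 ≤ t) :
    |t| ^ e * t = t ^ (e + 1) := by
  rcases eq_or_ne t 0 with rfl | ht0
  · simp [Real.zero_rpow he.ne']
  · rw [abs_of_nonneg ht, Real.rpow_add_one ht0]

/-- The signed power function `t ↦ |t|^e * t` is strictly monotone when `e + 1 > 0`. -/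
lemma stmt13_sp_strictMono {e : ℝ} (he : 0 < e + 1) :
    StrictMono (fun t : ℝ => |t| ^ e * t) := by
  have hodd : ∀ t : ℝ, |(-t)| ^ e * (-t) = -(|t| ^ e * t) := by
    intro t; rw [abs_neg]; ring
  have hpos : ∀ {s t : ℝ}, 0 ≤ s → s < t → |s| ^ e * s < |t| ^ e * t := by
    intro s t hs hst
    rw [stmt13_sp_nonneg_eq he hs, stmt13_sp_nonneg_eq he (hs.trans hst.le)]
    exact Real.rpow_lt_rpow hs hst he
  intro s t hst
  rcases le_or_gt 0 s with hs | hs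
  · exact hpos hs hst
  · rcases le_or_gt t 0 with ht | ht
    · have := hpos (by linarith : (0:ℝ) ≤ -t) (by linarith : -t < -s)
      rw [hodd, hodd] at this
      simpa using this
    · have h1 : |s| ^ e * s < 0 := by
        have : (0:ℝ) < |s| ^ e := Real.rpow_pos_of_pos (abs_pos.2 hs.ne) e
        nlinarith
      have h2 : (0:ℝ) < |t| ^ e * t := by
        have : (0:ℝ) < |t| ^ e := Real.rpow_pos_of_pos (abs_pos.2 ht.ne') e
        nlinarith
      exact h1.trans h2

/-- Composition identity: the `p`-signed power is obtained from the `q`-signed power by a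
further signed power with exponent `(p-1)/(q-1) - 1`. -/
lemma stmt13_sp_comp {p q : ℝ} (hq : 1 < q) (hqp : q < p) (t : ℝ) :
    |(|t| ^ (q - 2) * t)| ^ ((p - 1) / (q - 1) - 1) * (|t| ^ (q - 2) * t)
      = |t| ^ (p - 2) * t := by
  rcases eq_or_ne t 0 with rfl | ht
  · simp
  have hq1 : (0:ℝ) < q - 2 + 1 := by linarith
  have ht0 : (0:ℝ) < |t| := abs_pos.2 ht
  rw [stmt13_abs_sp hq1, ← Real.rpow_mul (abs_nonneg t)]
  have hq0 : q - 1 ≠ 0 := by linarith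
  have h1 : (q - 2 + 1) * ((p - 1) / (q - 1) - 1) = p - q := by
    field_simp; ring
  rw [h1, ← mul_assoc, ← Real.rpow_add ht0]
  ring_nf

/-- Derivative of the signed power function away from `0`. -/
lemma stmt13_hasDerivAt_sp (e : ℝ) {s : ℝ} (hs : s ≠ 0) :
    HasDerivAt (fun t : ℝ => |t| ^ e * t) ((e + 1) * |s| ^ e) s := by
  rcases hs.lt_or_gt with hneg | hpos
  · have h1 : HasDerivAt (fun t : ℝ => -((-t) ^ (e + 1)))
        ((e + 1) * (-s) ^ e) s := by
      have h0 : HasDerivAt (fun x : ℝ => x ^ (e + 1)) ((e + 1) * (-s) ^ (e + 1 - 1)) (-s) :=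
        Real.hasDerivAt_rpow_const (Or.inl (by simpa using hs))
      have h2 := (h0.comp s (hasDerivAt_neg s)).neg
      exact h2.congr_deriv (by ring_nf)
    have heq : (fun t : ℝ => |t| ^ e * t) =ᶠ[nhds s] (fun t : ℝ => -((-t) ^ (e + 1))) := by
      filter_upwards [Iio_mem_nhds hneg] with t ht
      have ht' : (0:ℝ) < -t := by simpa using ht
      rw [abs_of_neg ht, Real.rpow_add_one ht'.ne']
      ring
    have := h1.congr_of_eventuallyEq heq
    simpa [abs_of_neg hneg] using this
  · have h1 : HasDerivAt (fun t : ℝ => t ^ (e + 1)) ((e + 1) * s ^ e) s := by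
      have h0 : HasDerivAt (fun x : ℝ => x ^ (e + 1)) ((e + 1) * s ^ (e + 1 - 1)) s :=
        Real.hasDerivAt_rpow_const (Or.inl hs)
      simpa using h0
    have heq : (fun t : ℝ => |t| ^ e * t) =ᶠ[nhds s] (fun t : ℝ => t ^ (e + 1)) := by
      filter_upwards [Ioi_mem_nhds hpos] with t ht
      rw [abs_of_pos ht, Real.rpow_add_one (ne_of_gt ht)]
    have := h1.congr_of_eventuallyEq heq
    simpa [abs_of_pos hpos] using this

/-- A function with vanishing derivative on an open interval is constant there. -/
lemma stmt13_const_of_deriv_zero {a b : ℝ} {W : ℝ → ℝ}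
    (hW : ∀ x ∈ Ioo a b, HasDerivAt W 0 x) :
    ∀ s ∈ Ioo a b, ∀ t ∈ Ioo a b, W s = W t := by
  have key : ∀ s ∈ Ioo a b, ∀ t ∈ Ioo a b, s < t → W s = W t := by
    intro s hs t ht hst
    have hcont : ContinuousOn W (Icc s t) := fun z hz =>
      ((hW z ⟨lt_of_lt_of_le hs.1 hz.1, lt_of_le_of_lt hz.2 ht.2⟩).continuousAt).continuousWithinAt
    have hder : ∀ z ∈ Ioo s t, HasDerivAt W ((fun _ => (0:ℝ)) z) z := fun z hz =>
      hW z ⟨hs.1.trans hz.1, hz.2.trans ht.2⟩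
    obtain ⟨c, -, hc⟩ := exists_hasDerivAt_eq_slope W (fun _ => 0) hst hcont hder
    have hc' : (0:ℝ) = (W t - W s) / (t - s) := hc
    have := (div_eq_iff (sub_ne_zero.2 hst.ne')).1 hc'.symm
    have : W t - W s = 0 := by rw [this]; ring
    linarith
  intro s hs t ht
  rcases lt_trichotomy s t with h | h | h
  · exact key s hs t ht h
  · rw [h]
  · exact (key t ht s hs h).symm

/-- A continuous function on `[a,b]` that is constant on `(a,b)` takes that value at the
endpoints. -/
lemma stmt13_boundary_value {a b : ℝ} (hab : a < b) {v : ℝ → ℝ} {k : ℝ}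
    (hc : ContinuousOn v (Icc a b)) (h : ∀ x ∈ Ioo a b, v x = k) :
    v a = k ∧ v b = k := by
  have hne : (nhdsWithin a (Ioo a b)).NeBot := by
    rw [mem_closure_iff_nhdsWithin_neBot.symm, closure_Ioo hab.ne]
    exact ⟨le_refl a, hab.le⟩
  have hnb : (nhdsWithin b (Ioo a b)).NeBot := by
    rw [mem_closure_iff_nhdsWithin_neBot.symm, closure_Ioo hab.ne]
    exact ⟨hab.le, le_refl b⟩
  constructor
  · have t1 : Tendsto v (nhdsWithin a (Ioo a b)) (nhds (v a)) :=
      ((hc a (left_mem_Icc.2 hab.le)).mono Ioo_subset_Icc_self)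
    have t2 : Tendsto v (nhdsWithin a (Ioo a b)) (nhds k) := by
      refine Tendsto.congr' ?_ tendsto_const_nhds
      filter_upwards [self_mem_nhdsWithin] with x hx
      exact (h x hx).symm
    exact tendsto_nhds_unique t1 t2
  · have t1 : Tendsto v (nhdsWithin b (Ioo a b)) (nhds (v b)) :=
      ((hc b (right_mem_Icc.2 hab.le)).mono Ioo_subset_Icc_self)
    have t2 : Tendsto v (nhdsWithin b (Ioo a b)) (nhds k) := by
      refine Tendsto.congr' ?_ tendsto_const_nhds
      filter_upwards [self_mem_nhdsWithin] with x hx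
      exact (h x hx).symm
    exact tendsto_nhds_unique t1 t2

/-- A nontrivial Dirichlet eigenfunction of the one-dimensional `r`-Laplacian has a nonzero
eigenvalue. -/
lemma stmt13_lam_ne_zero (a b : ℝ) (hab : a < b) (r lam : ℝ) (hr : 1 < r)
    (u u' : ℝ → ℝ) (hc : ContinuousOn u (Icc a b))
    (ha : u a = 0) (hb : u b = 0) (hne : ∃ x ∈ Ioo a b, u x ≠ 0)
    (hd : ∀ x ∈ Ioo a b, HasDerivAt u (u' x) x)
    (heq : ∀ x ∈ Ioo a b, HasDerivAt (fun y => |u' y| ^ (r - 2) * u' y)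
      (-lam * |u x| ^ (r - 2) * u x) x) :
    lam ≠ 0 := by
  rintro rfl
  obtain ⟨x₀, hx₀, hux₀⟩ := hne
  have hW0 : ∀ x ∈ Ioo a b, HasDerivAt (fun y => |u' y| ^ (r - 2) * u' y) 0 x := by
    intro x hx
    simpa using heq x hx
  have hWconst := stmt13_const_of_deriv_zero hW0
  set μ := u' x₀ with hμ
  have hu' : ∀ x ∈ Ioo a b, u' x = μ := by
    intro x hx
    exact (stmt13_sp_strictMono (by linarith : (0:ℝ) < r - 2 + 1)).injective
      (hWconst x hx x₀ hx₀)
  set v := fun y => u y - μ * y with hv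
  have hv0 : ∀ x ∈ Ioo a b, HasDerivAt v 0 x := by
    intro x hx
    have := (hd x hx).sub ((hasDerivAt_id x).const_mul μ)
    rw [hu' x hx] at this
    rw [mul_one, sub_self] at this; exact this
  have hvconst := stmt13_const_of_deriv_zero hv0
  have hvcont : ContinuousOn v (Icc a b) :=
    hc.sub ((continuous_const.mul continuous_id).continuousOn)
  have hbd := stmt13_boundary_value hab hvcont (fun x hx => hvconst x hx x₀ hx₀)
  have hva : -(μ * a) = u x₀ - μ * x₀ := by
    have := hbd.1; simp only [hv, ha] at this; linarith
  have hvb : -(μ * b) = u x₀ - μ * x₀ := by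
    have := hbd.2; simp only [hv, hb] at this; linarith
  have hμ0 : μ = 0 := by
    have : μ * (b - a) = 0 := by linarith
    rcases mul_eq_zero.1 this with h | h
    · exact h
    · linarith [hab]
  apply hux₀
  rw [hμ0] at hva
  simpa [hμ0] using hva.symm

/-- The main analytic lemma: a single function cannot be a nontrivial Dirichlet eigenfunction
for both the `p`- and `q`-Laplacian, `1 < q < p`, with nonzero eigenvalues. -/
lemma stmt13_main_contra (a b : ℝ) (hab : a < b) (p q lamp lamq : ℝ)
    (hq : 1 < q) (hpq : q < p)
    (hlp : lamp ≠ 0) (hlq : lamq ≠ 0)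
    (u u' : ℝ → ℝ) (hc : ContinuousOn u (Icc a b)) (ha : u a = 0) (hb : u b = 0)
    (hne : ∃ x ∈ Ioo a b, u x ≠ 0)
    (hd : ∀ x ∈ Ioo a b, HasDerivAt u (u' x) x)
    (heqp : ∀ x ∈ Ioo a b, HasDerivAt (fun y => |u' y| ^ (p - 2) * u' y)
      (-lamp * |u x| ^ (p - 2) * u x) x)
    (heqq : ∀ x ∈ Ioo a b, HasDerivAt (fun y => |u' y| ^ (q - 2) * u' y)
      (-lamq * |u x| ^ (q - 2) * u x) x) :
    False := by
  obtain ⟨x₀, hx₀, hux₀⟩ := hne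
  set Wq := fun y => |u' y| ^ (q - 2) * u' y with hWq
  set α := (p - 1) / (q - 1) with hα
  have hα1 : 1 < α := by
    rw [hα, lt_div_iff₀ (by linarith : (0:ℝ) < q - 1)]
    linarith
  obtain ⟨xm, hxm_mem, hxm⟩ := isCompact_Icc.exists_isMaxOn (nonempty_Icc.2 hab.le)
    (continuous_abs.comp_continuousOn hc)
  have huxm : u xm ≠ 0 := by
    intro h0
    have h1 : |u x₀| ≤ |u xm| := hxm (Ioo_subset_Icc_self hx₀)
    rw [h0, abs_zero] at h1
    exact hux₀ (abs_eq_zero.1 (le_antisymm h1 (abs_nonneg _)))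
  have hxma : xm ≠ a := fun h => huxm (by rw [h, ha])
  have hxmb : xm ≠ b := fun h => huxm (by rw [h, hb])
  have hxm_Ioo : xm ∈ Ioo a b :=
    ⟨hxm_mem.1.lt_of_ne (Ne.symm hxma), hxm_mem.2.lt_of_ne hxmb⟩
  have hIccnhds : Icc a b ∈ nhds xm := Icc_mem_nhds hxm_Ioo.1 hxm_Ioo.2
  have hcontxm : ContinuousAt u xm := hc.continuousAt hIccnhds
  have hu'xm : u' xm = 0 := by
    rcases huxm.lt_or_gt with hneg | hpos
    · have hmin : IsLocalMin u xm := by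
        filter_upwards [hIccnhds] with z hz
        have h1 : |u z| ≤ |u xm| := hxm hz
        have := neg_abs_le (u z)
        have h2 : |u xm| = -(u xm) := abs_of_neg hneg
        linarith
      exact hmin.hasDerivAt_eq_zero (hd xm hxm_Ioo)
    · have hmax : IsLocalMax u xm := by
        filter_upwards [hIccnhds] with z hz
        have h1 : |u z| ≤ |u xm| := hxm hz
        have := le_abs_self (u z)
        have h2 : |u xm| = u xm := abs_of_pos hpos
        linarith
      exact hmax.hasDerivAt_eq_zero (hd xm hxm_Ioo)
  have hWqxm : Wq xm = 0 := by simp [hWq, hu'xm]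
  have hfreq : ∃ᶠ z in nhds xm, z ∈ Ioo a b ∧ u z ≠ 0 ∧ u' z ≠ 0 := by
    by_contra hcon
    rw [not_frequently] at hcon
    have hIoon : Ioo a b ∈ nhds xm := (isOpen_Ioo).mem_nhds hxm_Ioo
    have hune : ∀ᶠ z in nhds xm, u z ≠ 0 := hcontxm.eventually_ne huxm
    have hWz : (fun _ => (0:ℝ)) =ᶠ[nhds xm] Wq := by
      filter_upwards [hcon, hIoon, hune] with z h1 h2 h3
      have : u' z = 0 := by
        by_contra h4
        exact h1 ⟨h2, h3, h4⟩
      simp [hWq, this]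
    have hD : HasDerivAt Wq 0 xm :=
      (hasDerivAt_const xm (0:ℝ)).congr_of_eventuallyEq hWz.symm
    have h0 : -lamq * |u xm| ^ (q - 2) * u xm = 0 := (hD.unique (heqq xm hxm_Ioo)).symm
    have hpow : (0:ℝ) < |u xm| ^ (q - 2) := Real.rpow_pos_of_pos (abs_pos.2 huxm) _
    rcases mul_eq_zero.1 h0 with h1 | h1
    · rcases mul_eq_zero.1 h1 with h2 | h2
      · exact hlq (neg_eq_zero.1 h2)
      · exact absurd h2 hpow.ne'
    · exact huxm h1
  have hkey : ∀ z, z ∈ Ioo a b → u z ≠ 0 → u' z ≠ 0 →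
      lamp * |u z| ^ (p - q) = α * lamq * |Wq z| ^ (α - 1) := by
    intro z hz huz hu'z
    have hWz : Wq z ≠ 0 := by
      intro h0
      apply hu'z
      have h1 : |Wq z| = |u' z| ^ (q - 2 + 1) := stmt13_abs_sp (by linarith) (u' z)
      rw [h0, abs_zero] at h1
      have := Real.rpow_pos_of_pos (abs_pos.2 hu'z) (q - 2 + 1)
      linarith [this.trans_le h1.symm.le]
    have hG := stmt13_hasDerivAt_sp (α - 1) hWz
    have hcomp := hG.comp z (heqq z hz)
    have hfeq : (fun y => |u' y| ^ (p - 2) * u' y)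
        = (fun t : ℝ => |t| ^ (α - 1) * t) ∘ Wq := by
      funext y
      simp only [Function.comp, hWq, hα]
      exact (stmt13_sp_comp hq hpq (u' y)).symm
    rw [← hfeq] at hcomp
    have huniq := (heqp z hz).unique hcomp
    have hsplit : |u z| ^ (p - 2) = |u z| ^ (p - q) * |u z| ^ (q - 2) := by
      rw [← Real.rpow_add (abs_pos.2 huz)]
      ring_nf
    rw [hsplit] at huniq
    have hcancel : -lamp * |u z| ^ (p - q) = (α - 1 + 1) * |Wq z| ^ (α - 1) * (-lamq) := by
      have h2 : |u z| ^ (q - 2) * u z ≠ 0 :=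
        mul_ne_zero (Real.rpow_pos_of_pos (abs_pos.2 huz) _).ne' huz
      apply mul_right_cancel₀ h2
      linear_combination huniq
    have hα' : α - 1 + 1 = α := by ring
    rw [hα'] at hcancel
    linear_combination (-1 : ℝ) * hcancel
  have hWqcont : ContinuousAt Wq xm := (heqq xm hxm_Ioo).continuousAt
  set F := fun z => lamp * |u z| ^ (p - q) - α * lamq * |Wq z| ^ (α - 1) with hF
  have hFcont : ContinuousAt F xm := by
    have h1 : ContinuousAt (fun z => |u z| ^ (p - q)) xm :=
      (hcontxm.abs).rpow_const (Or.inl (abs_ne_zero.2 huxm))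
    have h2 : ContinuousAt (fun z => |Wq z| ^ (α - 1)) xm :=
      (hWqcont.abs).rpow_const (Or.inr (by linarith))
    exact (h1.const_mul lamp).sub ((h2.const_mul (α * lamq)))
  have hFxm : F xm = 0 := by
    by_contra hne0
    have hev : ∀ᶠ z in nhds xm, F z ≠ 0 := hFcont.eventually_ne hne0
    obtain ⟨z, hz1, hz2⟩ := (hfreq.and_eventually hev).exists
    exact hz2 (by rw [hF]; have := hkey z hz1.1 hz1.2.1 hz1.2.2; simp only []; linarith)
  rw [hF] at hFxm
  simp only [hWqxm, abs_zero] at hFxm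
  rw [Real.zero_rpow (by linarith : α - 1 ≠ 0)] at hFxm
  have hpow : (0:ℝ) < |u xm| ^ (p - q) := Real.rpow_pos_of_pos (abs_pos.2 huxm) _
  have : lamp * |u xm| ^ (p - q) = 0 := by linarith
  rcases mul_eq_zero.1 this with h | h
  · exact hlp h
  · linarith

/- STATEMENT 13 (N = 1): eigenfunctions of the one-dimensional Dirichlet p- and
q-Laplacians on a bounded interval (a,b), with 1 < q < p, are linearly independent.
An eigenfunction φ for exponent r and eigenvalue λ satisfies, in the classical sense,
(|φ′|^{r−2}φ′)′ = −λ|φ|^{r−2}φ on (a,b) and φ(a) = φ(b) = 0, φ ≢ 0. -/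
theorem stmt_13 (a b : ℝ) (hab : a < b)
    (p q lamp lamq : ℝ) (hq : 1 < q) (hpq : q < p)
    (φ ψ φ' ψ' : ℝ → ℝ)
    (hφcont : ContinuousOn φ (Set.Icc a b)) (hψcont : ContinuousOn ψ (Set.Icc a b))
    (hφa : φ a = 0) (hφb : φ b = 0) (hψa : ψ a = 0) (hψb : ψ b = 0)
    (hφne : ∃ x ∈ Set.Ioo a b, φ x ≠ 0) (hψne : ∃ x ∈ Set.Ioo a b, ψ x ≠ 0)
    (hφd : ∀ x ∈ Set.Ioo a b, HasDerivAt φ (φ' x) x)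
    (hψd : ∀ x ∈ Set.Ioo a b, HasDerivAt ψ (ψ' x) x)
    (hφeq : ∀ x ∈ Set.Ioo a b,
      HasDerivAt (fun y => |φ' y| ^ (p - 2) * φ' y) (-lamp * |φ x| ^ (p - 2) * φ x) x)
    (hψeq : ∀ x ∈ Set.Ioo a b,
      HasDerivAt (fun y => |ψ' y| ^ (q - 2) * ψ' y) (-lamq * |ψ x| ^ (q - 2) * ψ x) x) :
    ∀ c : ℝ, ¬ (∀ x ∈ Set.Ioo a b, φ x = c * ψ x) := by
  intro c h
  have hp : 1 < p := hq.trans hpq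
  obtain ⟨x₁, hx₁, hφx₁⟩ := hφne
  have hc0 : c ≠ 0 := by
    intro h0
    apply hφx₁
    rw [h x₁ hx₁, h0, zero_mul]
  have hIoon : ∀ x ∈ Ioo a b, Ioo a b ∈ nhds x := fun x hx => isOpen_Ioo.mem_nhds hx
  have hφ'ψ' : ∀ x ∈ Ioo a b, φ' x = c * ψ' x := by
    intro x hx
    have h1 : HasDerivAt φ (c * ψ' x) x := by
      refine ((hψd x hx).const_mul c).congr_of_eventuallyEq ?_
      filter_upwards [hIoon x hx] with y hy
      exact h y hy
    exact (hφd x hx).unique h1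
  set k := |c| ^ (p - 2) * c with hk
  have hk0 : k ≠ 0 := mul_ne_zero (Real.rpow_pos_of_pos (abs_pos.2 hc0) _).ne' hc0
  have heqψp : ∀ x ∈ Ioo a b, HasDerivAt (fun y => |ψ' y| ^ (p - 2) * ψ' y)
      (-lamp * |ψ x| ^ (p - 2) * ψ x) x := by
    intro x hx
    have habs : ∀ t : ℝ, |c * t| ^ (p - 2) * (c * t) = k * (|t| ^ (p - 2) * t) := by
      intro t
      rw [abs_mul, Real.mul_rpow (abs_nonneg c) (abs_nonneg t), hk]
      ring
    have hval : -lamp * |φ x| ^ (p - 2) * φ x = k * (-lamp * (|ψ x| ^ (p - 2) * ψ x)) := by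
      rw [h x hx]
      linear_combination (-lamp) * habs (ψ x)
    have heq : (fun y => k * (|ψ' y| ^ (p - 2) * ψ' y)) =ᶠ[nhds x]
        (fun y => |φ' y| ^ (p - 2) * φ' y) := by
      filter_upwards [hIoon x hx] with y hy
      rw [hφ'ψ' y hy]
      exact (habs (ψ' y)).symm
    have h1 : HasDerivAt (fun y => k * (|ψ' y| ^ (p - 2) * ψ' y))
        (k * (-lamp * (|ψ x| ^ (p - 2) * ψ x))) x := by
      have h1' := (hφeq x hx).congr_of_eventuallyEq heq
      rwa [hval] at h1'
    have h2 := h1.const_mul k⁻¹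
    have heq2 : (fun y => |ψ' y| ^ (p - 2) * ψ' y) =ᶠ[nhds x]
        (fun y => k⁻¹ * (k * (|ψ' y| ^ (p - 2) * ψ' y))) :=
      Filter.Eventually.of_forall (fun y => (inv_mul_cancel_left₀ hk0 _).symm)
    have h3 := h2.congr_of_eventuallyEq heq2
    have hval2 : k⁻¹ * (k * (-lamp * (|ψ x| ^ (p - 2) * ψ x)))
        = -lamp * |ψ x| ^ (p - 2) * ψ x := by
      rw [inv_mul_cancel_left₀ hk0]; ring
    rwa [hval2] at h3
  have hlq : lamq ≠ 0 :=
    stmt13_lam_ne_zero a b hab q lamq hq ψ ψ' hψcont hψa hψb hψne hψd hψeq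
  have hlp : lamp ≠ 0 :=
    stmt13_lam_ne_zero a b hab p lamp hp ψ ψ' hψcont hψa hψb hψne hψd heqψp
  exact stmt13_main_contra a b hab p q lamp lamq hq hpq hlp hlq ψ ψ'
    hψcont hψa hψb hψne hψd heqψp hψeq
end

section
/- Let 1 < q < p, α = α_* := ‖∇φ_q‖_p^p/‖φ_q‖_p^p, and β = λ₁(q). Then tφ_q ∈ N_{α,β} for every t ≠ 0 and E_{α,β}(tφ_q) = 0; moreover d(α,β) := inf{E_{α,β}(u) : u ∈ N_{α,β}} = 0, and every minimizer u₀ of d(α,β) satisfies u₀ ∈ ℝφ_q \ {0}. -/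
/- STATEMENT 15: for α = α_* := ‖∇φ_q‖_p^p/‖φ_q‖_p^p and β = λ₁(q): t φ_q lies on the
Nehari manifold with E_{α,β}(t φ_q) = 0 for every t ≠ 0, the least energy
d(α,β) = inf_N E_{α,β} equals 0, and every minimizer belongs to ℝφ_q \ {0}. -/
theorem stmt_15 {V : Type*} [AddCommGroup V] [Module ℝ V]
    (p q : ℝ) (hq : 1 < q) (hpq : q < p)
    (Dp Np Dq Nq : V → ℝ) (lam1q : ℝ) (φq : V) (hφq : φq ≠ 0)
    (hDphom : ∀ (t : ℝ) (u : V), Dp (t • u) = |t| ^ p * Dp u)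
    (hNphom : ∀ (t : ℝ) (u : V), Np (t • u) = |t| ^ p * Np u)
    (hDqhom : ∀ (t : ℝ) (u : V), Dq (t • u) = |t| ^ q * Dq u)
    (hNqhom : ∀ (t : ℝ) (u : V), Nq (t • u) = |t| ^ q * Nq u)
    (hG : ∀ u : V, 0 ≤ Dq u - lam1q * Nq u)
    (hGeq : ∀ u : V, u ≠ 0 → (Dq u - lam1q * Nq u = 0 ↔ ∃ c : ℝ, u = c • φq))
    (hNpφq : 0 < Np φq)
    (E : V → ℝ)
    (hE : ∀ u, E u = (Dp u - (Dp φq / Np φq) * Np u) / p + (Dq u - lam1q * Nq u) / q) :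
    (∀ t : ℝ, t ≠ 0 →
        t • φq ≠ 0 ∧
        (Dp (t • φq) - (Dp φq / Np φq) * Np (t • φq))
          + (Dq (t • φq) - lam1q * Nq (t • φq)) = 0 ∧
        E (t • φq) = 0) ∧
    sInf {r : ℝ | ∃ u : V, u ≠ 0 ∧
        (Dp u - (Dp φq / Np φq) * Np u) + (Dq u - lam1q * Nq u) = 0 ∧ r = E u} = 0 ∧
    (∀ u : V, u ≠ 0 →
        (Dp u - (Dp φq / Np φq) * Np u) + (Dq u - lam1q * Nq u) = 0 →
        E u = 0 → ∃ c : ℝ, c ≠ 0 ∧ u = c • φq) := by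
  have hp0 : (0:ℝ) < p := by linarith
  have hq0 : (0:ℝ) < q := by linarith
  -- G(φq) = 0
  have hGφ : Dq φq - lam1q * Nq φq = 0 :=
    (hGeq φq hφq).mpr ⟨1, (one_smul ℝ φq).symm⟩
  have hHφ : Dp φq - (Dp φq / Np φq) * Np φq = 0 := by
    field_simp
    ring
  -- first part
  have part1 : ∀ t : ℝ, t ≠ 0 →
      t • φq ≠ 0 ∧
      (Dp (t • φq) - (Dp φq / Np φq) * Np (t • φq))
        + (Dq (t • φq) - lam1q * Nq (t • φq)) = 0 ∧
      E (t • φq) = 0 := by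
    intro t ht
    have hne : t • φq ≠ 0 := smul_ne_zero ht hφq
    have hH : Dp (t • φq) - (Dp φq / Np φq) * Np (t • φq) = 0 := by
      rw [hDphom, hNphom]
      have : |t| ^ p * Dp φq - Dp φq / Np φq * (|t| ^ p * Np φq)
          = |t| ^ p * (Dp φq - Dp φq / Np φq * Np φq) := by ring
      rw [this, hHφ, mul_zero]
    have hGt : Dq (t • φq) - lam1q * Nq (t • φq) = 0 := by
      rw [hDqhom, hNqhom]
      have : |t| ^ q * Dq φq - lam1q * (|t| ^ q * Nq φq)
          = |t| ^ q * (Dq φq - lam1q * Nq φq) := by ring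
      rw [this, hGφ, mul_zero]
    refine ⟨hne, by rw [hH, hGt]; ring, ?_⟩
    rw [hE, hH, hGt]; simp
  refine ⟨part1, ?_, ?_⟩
  · -- the infimum
    have hmem : (0:ℝ) ∈ {r : ℝ | ∃ u : V, u ≠ 0 ∧
        (Dp u - (Dp φq / Np φq) * Np u) + (Dq u - lam1q * Nq u) = 0 ∧ r = E u} := by
      obtain ⟨h1, h2, h3⟩ := part1 1 one_ne_zero
      exact ⟨(1:ℝ) • φq, h1, h2, h3.symm⟩
    have hlb : ∀ r ∈ {r : ℝ | ∃ u : V, u ≠ 0 ∧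
        (Dp u - (Dp φq / Np φq) * Np u) + (Dq u - lam1q * Nq u) = 0 ∧ r = E u},
        (0:ℝ) ≤ r := by
      rintro r ⟨u, -, hn, rfl⟩
      have hGu := hG u
      have hHu : Dp u - (Dp φq / Np φq) * Np u = -(Dq u - lam1q * Nq u) := by
        linarith
      rw [hE, hHu]
      have hkey : -(Dq u - lam1q * Nq u) / p + (Dq u - lam1q * Nq u) / q
          = (Dq u - lam1q * Nq u) * (p - q) / (p * q) := by
        field_simp; ring
      rw [hkey]
      exact div_nonneg (mul_nonneg hGu (by linarith)) (by positivity)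
    exact le_antisymm (csInf_le ⟨0, hlb⟩ hmem) (le_csInf ⟨0, hmem⟩ hlb)
  · intro u hu hn hEu
    have hGu := hG u
    have hHu : Dp u - (Dp φq / Np φq) * Np u = -(Dq u - lam1q * Nq u) := by linarith
    rw [hE, hHu] at hEu
    have hkey : -(Dq u - lam1q * Nq u) / p + (Dq u - lam1q * Nq u) / q
        = (Dq u - lam1q * Nq u) * (p - q) / (p * q) := by
      field_simp; ring
    rw [hkey] at hEu
    have hG0 : Dq u - lam1q * Nq u = 0 := by
      have hpq' : 0 < p - q := by linarith
      have := (div_eq_zero_iff.mp hEu).resolve_right (by positivity)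
      exact (mul_eq_zero.mp this).resolve_right (by linarith)
    obtain ⟨c, hc⟩ := (hGeq u hu).mp hG0
    refine ⟨c, ?_, hc⟩
    rintro rfl
    simp at hc
    exact hu hc
end
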